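/- arXiv:2012.00824 — 2 statements merged into one kernel-verified Lean document; each statement's English description precedes it below -/
import Mathlib

section
/- Let A and Â be real symmetric p×p matrices with eigenvalues λ₁ ≥ λ₂ ≥ … ≥ λ_p and λ̂₁ ≥ λ̂₂ ≥ … ≥ λ̂_p respectively, and let v_i and v̂_i be unit-norm eigenvectors of A and Â corresponding to λ_i and λ̂_i. Fix an index i with 1 ≤ i ≤ p and suppose min(|λ̂_{i-1} − λ_i|, |λ̂_{i+1} − λ_i|) > 0 (interpreting λ̂₀ = +∞ and λ̂_{p+1} = −∞). Then there is a sign s ∈ {−1, +1} such that ‖s·v̂_i − v_i‖ ≤ 2^{3/2}·‖A − Â‖ / min(|λ̂_{i-1} − λ_i|, |λ̂_{i+1} − λ_i|), where ‖A − Â‖ is the spectral norm and ‖s·v̂_i − v_i‖ the Euclidean norm. -/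
set_option maxHeartbeats 1000000

open Matrix

/-- The spectral norm (largest singular value) of a real matrix, as the
operator norm of the induced map between Euclidean spaces. -/
noncomputable def specNorm {m n : ℕ} (A : Matrix (Fin m) (Fin n) ℝ) : ℝ :=
  ‖(Matrix.toEuclideanLin A).toContinuousLinearMap‖

/-- The Euclidean (ℓ2) norm of a real vector. -/
noncomputable def vecNorm {n : ℕ} (x : Fin n → ℝ) : ℝ :=
  Real.sqrt (∑ i, x i ^ 2)

section DKHelpers
variable {p : ℕ}

noncomputable def toE {n : ℕ} (x : Fin n → ℝ) : EuclideanSpace ℝ (Fin n) :=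
  (WithLp.equiv 2 _).symm x
lemma vecNorm_eq (x : Fin p → ℝ) : vecNorm x = ‖toE x‖ := by
  rw [EuclideanSpace.norm_eq, vecNorm]; simp [toE, sq_abs]
lemma inner_toE (x y : Fin p → ℝ) : (inner ℝ (toE x) (toE y) : ℝ) = x ⬝ᵥ y := by
  simp [toE, PiLp.inner_apply, dotProduct, RCLike.inner_apply, mul_comm]
lemma dot_self_eq (x : Fin p → ℝ) : x ⬝ᵥ x = vecNorm x ^ 2 := by
  rw [vecNorm_eq, ← inner_toE, real_inner_self_eq_norm_sq]
lemma vecNorm_nonneg (x : Fin p → ℝ) : 0 ≤ vecNorm x := by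
  rw [vecNorm_eq]; exact norm_nonneg _
lemma vecNorm_sub_le (x y : Fin p → ℝ) : vecNorm (x - y) ≤ vecNorm x + vecNorm y := by
  rw [vecNorm_eq, vecNorm_eq, vecNorm_eq]
  have : toE (x - y) = toE x - toE y := rfl
  rw [this]; exact norm_sub_le _ _
lemma abs_dot_le (x y : Fin p → ℝ) : |x ⬝ᵥ y| ≤ vecNorm x * vecNorm y := by
  rw [← inner_toE, vecNorm_eq, vecNorm_eq]; exact abs_real_inner_le_norm _ _
lemma mulVec_norm_le (M : Matrix (Fin p) (Fin p) ℝ) (x : Fin p → ℝ) :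
    vecNorm (M.mulVec x) ≤ specNorm M * vecNorm x := by
  rw [vecNorm_eq, vecNorm_eq]
  have : toE (M.mulVec x) = (Matrix.toEuclideanLin M).toContinuousLinearMap (toE x) := by
    simp [toE, Matrix.toEuclideanLin_apply]
  rw [this]
  exact (Matrix.toEuclideanLin M).toContinuousLinearMap.le_opNorm _
lemma specNorm_nonneg (M : Matrix (Fin p) (Fin p) ℝ) : 0 ≤ specNorm M := norm_nonneg _
lemma specNorm_sub_comm (M N : Matrix (Fin p) (Fin p) ℝ) :
    specNorm (M - N) = specNorm (N - M) := by
  unfold specNorm; rw [← neg_sub M N, map_neg, map_neg, norm_neg]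
lemma dot_sum {ι : Type*} (s : Finset ι) (x : Fin p → ℝ) (w : ι → Fin p → ℝ) :
    x ⬝ᵥ (∑ l ∈ s, w l) = ∑ l ∈ s, x ⬝ᵥ w l := by
  simp only [dotProduct, Finset.sum_apply, Finset.mul_sum]; exact Finset.sum_comm
lemma sum_dot {ι : Type*} (s : Finset ι) (x : Fin p → ℝ) (w : ι → Fin p → ℝ) :
    (∑ l ∈ s, w l) ⬝ᵥ x = ∑ l ∈ s, w l ⬝ᵥ x := by
  rw [dotProduct_comm, dot_sum]; simp [dotProduct_comm]
lemma ortho_li (u : Fin p → (Fin p → ℝ))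
    (h : ∀ j k, u j ⬝ᵥ u k = if j = k then (1 : ℝ) else 0) :
    LinearIndependent ℝ u := by
  rw [linearIndependent_iff']
  intro s g hg j hj
  have h2 := congrArg (fun w => u j ⬝ᵥ w) hg
  simp only [dot_sum, dotProduct_smul, h, smul_eq_mul, mul_ite, mul_one, mul_zero] at h2
  rw [Finset.sum_ite_eq s j g] at h2
  simpa [hj] using h2
lemma ortho_complete (u : Fin p → (Fin p → ℝ))
    (h : ∀ j k, u j ⬝ᵥ u k = if j = k then (1 : ℝ) else 0) (x : Fin p → ℝ) :
    x = ∑ l, (u l ⬝ᵥ x) • u l := by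
  rcases Nat.eq_zero_or_pos p with hp | hp
  · subst hp; funext i; exact absurd i.2 (by omega)
  have : Nonempty (Fin p) := ⟨⟨0, hp⟩⟩
  have hli := ortho_li u h
  have hx : x ∈ Submodule.span ℝ (Set.range u) := by
    rw [← coe_basisOfLinearIndependentOfCardEqFinrank hli
      (by simp [Module.finrank_fin_fun] : Fintype.card (Fin p) = Module.finrank ℝ (Fin p → ℝ))]
    rw [Module.Basis.span_eq]; trivial
  rw [Submodule.mem_span_range_iff_exists_fun] at hx
  obtain ⟨c, hc⟩ := hx
  have hcoef : ∀ m, c m = u m ⬝ᵥ x := by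
    intro m
    have := congrArg (fun w => u m ⬝ᵥ w) hc
    simp only [dot_sum, dotProduct_smul, h, smul_eq_mul, mul_ite, mul_one, mul_zero] at this
    rw [Finset.sum_ite_eq Finset.univ m c] at this
    simpa using this
  conv_lhs => rw [← hc]
  exact Finset.sum_congr rfl fun m _ => by rw [← hcoef m]
lemma combo_dot_combo {ι : Type*} [Fintype ι] [DecidableEq ι] (u : Fin p → Fin p → ℝ)
    (h : ∀ j k, u j ⬝ᵥ u k = if j = k then (1:ℝ) else 0)
    {e : ι → Fin p} (he : Function.Injective e) (c d : ι → ℝ) :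
    (∑ l, c l • u (e l)) ⬝ᵥ (∑ m, d m • u (e m)) = ∑ l, c l * d l := by
  rw [sum_dot]
  refine Finset.sum_congr rfl fun l _ => ?_
  rw [smul_dotProduct, dot_sum]
  simp only [dotProduct_smul, h, he.eq_iff, smul_eq_mul, mul_ite, mul_one, mul_zero]
  rw [Finset.sum_ite_eq Finset.univ l d]
  simp
lemma mulVec_combo {ι : Type*} [Fintype ι] (M : Matrix (Fin p) (Fin p) ℝ)
    (lam : Fin p → ℝ) (u : Fin p → Fin p → ℝ)
    (heig : ∀ j, M.mulVec (u j) = lam j • u j) (e : ι → Fin p) (c : ι → ℝ) :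
    M.mulVec (∑ l, c l • u (e l)) = ∑ l, (c l * lam (e l)) • u (e l) := by
  have h1 : M.mulVec (∑ l, c l • u (e l)) = ∑ l, c l • M.mulVec (u (e l)) := by
    rw [← Matrix.mulVecLin_apply, map_sum]
    simp [Matrix.mulVecLin_apply]
  rw [h1]
  exact Finset.sum_congr rfl fun l _ => by rw [heig, smul_smul]
lemma weyl (A Ahat : Matrix (Fin p) (Fin p) ℝ)
    (lam lamhat : Fin p → ℝ)
    (v vhat : Fin p → (Fin p → ℝ))
    (hlam : Antitone lam) (hlamhat : Antitone lamhat)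
    (hv : ∀ j k, v j ⬝ᵥ v k = if j = k then (1 : ℝ) else 0)
    (hvhat : ∀ j k, vhat j ⬝ᵥ vhat k = if j = k then (1 : ℝ) else 0)
    (heig : ∀ j, A.mulVec (v j) = lam j • v j)
    (heighat : ∀ j, Ahat.mulVec (vhat j) = lamhat j • vhat j)
    (j : Fin p) : lam j - lamhat j ≤ specNorm (A - Ahat) := by
  set k := (j : ℕ) with hk
  have hk1 : k + 1 ≤ p := j.isLt
  have hk2 : k ≤ p := le_of_lt j.isLt
  set e1 : Fin (k+1) → Fin p := Fin.castLE hk1 with he1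
  set e2 : Fin k → Fin p := Fin.castLE hk2 with he2
  -- the linear map whose kernel provides the test vector
  set L : (Fin (k+1) → ℝ) →ₗ[ℝ] (Fin k → ℝ) :=
    { toFun := fun c => fun m => vhat (e2 m) ⬝ᵥ (∑ l, c l • v (e1 l)),
      map_add' := by
        intro a b
        funext m
        simp only [Pi.add_apply, add_smul, Finset.sum_add_distrib, dotProduct_add]
      map_smul' := by
        intro r a
        funext m
        simp only [Pi.smul_apply, smul_eq_mul, RingHom.id_apply, ← smul_smul,
          ← Finset.smul_sum, dotProduct_smul] } with hL
  have hker : LinearMap.ker L ≠ ⊥ := by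
    intro hkk
    have hinj := LinearMap.ker_eq_bot.mp hkk
    have hle := LinearMap.finrank_le_finrank_of_injective hinj
    simp only [Module.finrank_fin_fun] at hle
    omega
  obtain ⟨c, hc_mem, hc_ne⟩ := (Submodule.ne_bot_iff _).mp hker
  set w : Fin p → ℝ := ∑ l, c l • v (e1 l) with hw
  have hLc : ∀ m : Fin k, vhat (e2 m) ⬝ᵥ w = 0 := by
    intro m
    have := congrFun (LinearMap.mem_ker.mp hc_mem) m
    simpa [hL, hw] using this
  set N : ℝ := ∑ l, c l * c l with hNdef
  have hN : w ⬝ᵥ w = N := combo_dot_combo v hv (Fin.castLE_injective hk1) c c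
  have hNpos : 0 < N := by
    obtain ⟨l0, hl0⟩ := Function.ne_iff.mp hc_ne
    refine Finset.sum_pos' (fun l _ => mul_self_nonneg _) ⟨l0, Finset.mem_univ _, ?_⟩
    exact mul_self_pos.mpr (by simpa using hl0)
  have hAw : w ⬝ᵥ A.mulVec w = ∑ l, lam (e1 l) * (c l * c l) := by
    rw [hw, mulVec_combo A lam v heig,
      combo_dot_combo v hv (Fin.castLE_injective hk1) c (fun l => c l * lam (e1 l))]
    exact Finset.sum_congr rfl fun l _ => by ring
  have hAw_ge : lam j * N ≤ w ⬝ᵥ A.mulVec w := by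
    rw [hAw, hNdef, Finset.mul_sum]
    refine Finset.sum_le_sum fun l _ => ?_
    refine mul_le_mul_of_nonneg_right (hlam ?_) (mul_self_nonneg _)
    exact Fin.le_def.mpr (by simpa [he1] using Nat.lt_succ_iff.mp l.isLt)
  set d : Fin p → ℝ := fun l => vhat l ⬝ᵥ w with hd
  have hw_exp : w = ∑ l, d l • vhat l := ortho_complete vhat hvhat w
  have hd0 : ∀ l : Fin p, (l : ℕ) < k → d l = 0 := by
    intro l hl
    have := hLc ⟨(l : ℕ), hl⟩
    have he : e2 ⟨(l : ℕ), hl⟩ = l := by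
      apply Fin.ext; simp [he2]
    rw [he] at this
    simpa [hd] using this
  have hw_exp' : w = ∑ l, d l • vhat (id l) := by simpa using hw_exp
  have hdN : (∑ l, d l * d l) = N := by
    rw [← hN]
    conv_rhs => rw [hw_exp']
    rw [combo_dot_combo vhat hvhat Function.injective_id d d]
  have hAhatw : w ⬝ᵥ Ahat.mulVec w = ∑ l, lamhat l * (d l * d l) := by
    conv_lhs => rw [hw_exp', mulVec_combo Ahat lamhat vhat heighat id d,
      combo_dot_combo vhat hvhat Function.injective_id d (fun l => d l * lamhat (id l))]
    exact Finset.sum_congr rfl fun l _ => by simp; ring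
  have hAhat_le : w ⬝ᵥ Ahat.mulVec w ≤ lamhat j * N := by
    rw [hAhatw, ← hdN, Finset.mul_sum]
    refine Finset.sum_le_sum fun l _ => ?_
    by_cases hl : (l : ℕ) < k
    · simp [hd0 l hl]
    · refine mul_le_mul_of_nonneg_right (hlamhat ?_) (mul_self_nonneg _)
      exact Fin.le_def.mpr (by omega)
  have hdiff : (lam j - lamhat j) * N ≤ w ⬝ᵥ ((A - Ahat).mulVec w) := by
    rw [sub_mulVec, dotProduct_sub]
    have := sub_le_sub hAw_ge hAhat_le
    nlinarith [this]
  have hbound : w ⬝ᵥ ((A - Ahat).mulVec w) ≤ specNorm (A - Ahat) * N := by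
    have h1 := abs_dot_le w ((A - Ahat).mulVec w)
    have h2 := mulVec_norm_le (A - Ahat) w
    have h3 : vecNorm w ^ 2 = N := by rw [← dot_self_eq, hN]
    have h4 := vecNorm_nonneg w
    have h5 := specNorm_nonneg (A - Ahat)
    have h6 := le_abs_self (w ⬝ᵥ (A - Ahat).mulVec w)
    nlinarith [vecNorm_nonneg ((A - Ahat).mulVec w)]
  have := hdiff.trans hbound
  exact le_of_mul_le_mul_right (by linarith [this]) hNpos

end DKHelpers

/-- Variant of the Davis–Kahan sin θ theorem (Yu–Wang–Samworth).
`A` and `Ahat` are symmetric `p × p` matrices, `lam` and `lamhat` are their full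
spectra listed in non-increasing order (with corresponding orthonormal
eigenvector families `v`, `vhat`).  `gap` is a positive lower bound on
`min (|λ̂_{i-1} − λ_i|, |λ̂_{i+1} − λ_i|)` (the conditions referring to indices
outside `1..p` are interpreted as `λ̂₀ = +∞`, `λ̂_{p+1} = −∞`, i.e. omitted).
Then, up to a sign `s`, `‖s·v̂ᵢ − vᵢ‖ ≤ 2^{3/2} ‖A − Â‖ / gap`. -/
theorem davis_kahan_sin_theta_variant {p : ℕ}
    (A Ahat : Matrix (Fin p) (Fin p) ℝ)
    (hA : A.IsSymm) (hAhat : Ahat.IsSymm)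
    (lam lamhat : Fin p → ℝ)
    (v vhat : Fin p → (Fin p → ℝ))
    (hlam : Antitone lam) (hlamhat : Antitone lamhat)
    (hv : ∀ j k, v j ⬝ᵥ v k = if j = k then (1 : ℝ) else 0)
    (hvhat : ∀ j k, vhat j ⬝ᵥ vhat k = if j = k then (1 : ℝ) else 0)
    (heig : ∀ j, A.mulVec (v j) = lam j • v j)
    (heighat : ∀ j, Ahat.mulVec (vhat j) = lamhat j • vhat j)
    (i : Fin p)
    (gap : ℝ) (hgap_pos : 0 < gap)
    (hgap_pred : ∀ j : Fin p, (j : ℕ) + 1 = (i : ℕ) → gap ≤ |lamhat j - lam i|)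
    (hgap_succ : ∀ j : Fin p, (j : ℕ) = (i : ℕ) + 1 → gap ≤ |lamhat j - lam i|) :
    ∃ s : ℝ, (s = 1 ∨ s = -1) ∧
      vecNorm (s • vhat i - v i) ≤ 2 ^ ((3 : ℝ) / 2) * specNorm (A - Ahat) / gap := by
  set ε := specNorm (A - Ahat) with hεdef
  have hεnn : 0 ≤ ε := specNorm_nonneg _
  have hnorm_vhat : vecNorm (vhat i) = 1 := by
    have h1 : vhat i ⬝ᵥ vhat i = 1 := by simpa using hvhat i i
    have h2 := dot_self_eq (vhat i)
    rw [h1] at h2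
    nlinarith [vecNorm_nonneg (vhat i)]
  have hnorm_v : vecNorm (v i) = 1 := by
    have h1 : v i ⬝ᵥ v i = 1 := by simpa using hv i i
    have h2 := dot_self_eq (v i)
    rw [h1] at h2
    nlinarith [vecNorm_nonneg (v i)]
  have h32 : (2:ℝ) ^ ((3:ℝ)/2) = 2 * Real.sqrt 2 := by
    rw [show (3:ℝ)/2 = 1 + 1/2 by norm_num, Real.rpow_add (by norm_num), Real.rpow_one,
      ← Real.sqrt_eq_rpow]
  have hsqrt2 : Real.sqrt 2 ^ 2 = 2 := Real.sq_sqrt (by norm_num)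
  have hsqrt2_pos : 0 < Real.sqrt 2 := Real.sqrt_pos.mpr (by norm_num)
  by_cases hcase : 2 ≤ 2 ^ ((3:ℝ)/2) * ε / gap
  · refine ⟨1, Or.inl rfl, ?_⟩
    rw [one_smul]
    calc vecNorm (vhat i - v i) ≤ vecNorm (vhat i) + vecNorm (v i) := vecNorm_sub_le _ _
      _ = 2 := by rw [hnorm_vhat, hnorm_v]; norm_num
      _ ≤ 2 ^ ((3:ℝ)/2) * ε / gap := hcase
  · push_neg at hcase
    rw [h32, div_lt_iff₀ hgap_pos] at hcase
    have hε_lt : Real.sqrt 2 * ε < gap := by nlinarith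
    have hε_lt' : ε < gap := by nlinarith
    have hW1 := weyl A Ahat lam lamhat v vhat hlam hlamhat hv hvhat heig heighat
    have hW2 : ∀ j, lamhat j - lam j ≤ ε := fun j => by
      have := weyl Ahat A lamhat lam vhat v hlamhat hlam hvhat hv heighat heig j
      rwa [specNorm_sub_comm] at this
    have key : ∀ j : Fin p, j ≠ i → gap ^ 2 ≤ (lamhat j - lam i) ^ 2 := by
      intro j hj
      have hne : (j:ℕ) ≠ (i:ℕ) := fun h => hj (Fin.ext h)
      rcases lt_or_gt_of_ne hne with hlt | hgt
      · have hi1 : 1 ≤ (i:ℕ) := by omega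
        have hlt' : (i:ℕ) - 1 < p := by have := i.isLt; omega
        set j' : Fin p := ⟨(i:ℕ) - 1, hlt'⟩ with hj'def
        have hj'1 : (j':ℕ) + 1 = (i:ℕ) := by show (i:ℕ) - 1 + 1 = (i:ℕ); omega
        have hgapj := hgap_pred j' hj'1
        have hwj := hW1 j'
        have hlamj' : lam i ≤ lam j' := by
          refine hlam (Fin.le_def.mpr ?_)
          show (i:ℕ) - 1 ≤ (i:ℕ); omega
        have h1 : lam i + gap ≤ lamhat j' := by
          rcases le_abs.mp hgapj with h | h
          · linarith
          · linarith
        have h2 : lamhat j' ≤ lamhat j := by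
          refine hlamhat (Fin.le_def.mpr ?_)
          show (j:ℕ) ≤ (i:ℕ) - 1; omega
        nlinarith
      · have hip : (i:ℕ) + 1 < p := by have := j.isLt; omega
        set j' : Fin p := ⟨(i:ℕ) + 1, hip⟩ with hj'def
        have hgapj := hgap_succ j' rfl
        have hwj := hW2 j'
        have hlamj' : lam j' ≤ lam i := by
          refine hlam (Fin.le_def.mpr ?_)
          show (i:ℕ) ≤ (i:ℕ) + 1; omega
        have h1 : lamhat j' ≤ lam i - gap := by
          rcases le_abs.mp hgapj with h | h
          · linarith
          · linarith
        have h2 : lamhat j ≤ lamhat j' := by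
          refine hlamhat (Fin.le_def.mpr ?_)
          show (i:ℕ) + 1 ≤ (j:ℕ); omega
        nlinarith
    set cc : Fin p → ℝ := fun l => vhat l ⬝ᵥ v i with hccdef
    have hexp : v i = ∑ l, cc l • vhat (id l) := by
      simpa using ortho_complete vhat hvhat (v i)
    have hsum1 : ∑ l, cc l * cc l = 1 := by
      have h1 : v i ⬝ᵥ v i = 1 := by simpa using hv i i
      have h2 := combo_dot_combo vhat hvhat Function.injective_id cc cc
      rw [← hexp, h1] at h2
      exact h2.symm
    set w : Fin p → ℝ := Ahat.mulVec (v i) - lam i • v i with hwdef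
    have hw1 : w = (Ahat - A).mulVec (v i) := by
      rw [hwdef, sub_mulVec, heig i]
    have hwnorm : vecNorm w ≤ ε := by
      rw [hw1]
      have h := mulVec_norm_le (Ahat - A) (v i)
      rw [hnorm_v, mul_one, specNorm_sub_comm] at h
      exact h
    have hw_eq : w = ∑ l, ((lamhat l - lam i) * cc l) • vhat (id l) := by
      rw [hwdef]
      conv_lhs => rw [hexp]
      rw [mulVec_combo Ahat lamhat vhat heighat id cc, Finset.smul_sum,
        ← Finset.sum_sub_distrib]
      refine Finset.sum_congr rfl fun l _ => ?_
      simp only [id_eq]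
      rw [smul_smul, ← sub_smul]
      congr 1
      ring
    have hw2 : ∑ l, ((lamhat l - lam i) * cc l) * ((lamhat l - lam i) * cc l) ≤ ε ^ 2 := by
      have hdd := combo_dot_combo vhat hvhat Function.injective_id
        (fun l => (lamhat l - lam i) * cc l) (fun l => (lamhat l - lam i) * cc l)
      rw [← hw_eq] at hdd
      rw [← hdd, dot_self_eq]
      exact pow_le_pow_left₀ (vecNorm_nonneg w) hwnorm 2
    have htail : gap ^ 2 * (1 - cc i * cc i) ≤ ε ^ 2 := by
      have hsplit : ∑ l, cc l * cc l
          = cc i * cc i + ∑ l ∈ Finset.univ.erase i, cc l * cc l :=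
        (Finset.add_sum_erase Finset.univ (fun l => cc l * cc l) (Finset.mem_univ i)).symm
      have h1 : ∑ l ∈ Finset.univ.erase i, gap ^ 2 * (cc l * cc l)
          ≤ ∑ l ∈ Finset.univ.erase i, (lamhat l - lam i) ^ 2 * (cc l * cc l) := by
        refine Finset.sum_le_sum fun l hl => ?_
        exact mul_le_mul_of_nonneg_right (key l (Finset.ne_of_mem_erase hl)) (mul_self_nonneg _)
      have h2 : ∑ l ∈ Finset.univ.erase i, (lamhat l - lam i) ^ 2 * (cc l * cc l)
          ≤ ∑ l, (lamhat l - lam i) ^ 2 * (cc l * cc l) := by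
        refine Finset.sum_le_sum_of_subset_of_nonneg (Finset.subset_univ _) fun l _ _ => ?_
        exact mul_nonneg (sq_nonneg _) (mul_self_nonneg _)
      have h3 : ∑ l, (lamhat l - lam i) ^ 2 * (cc l * cc l)
          = ∑ l, ((lamhat l - lam i) * cc l) * ((lamhat l - lam i) * cc l) := by
        exact Finset.sum_congr rfl fun l _ => by ring
      have h4 : gap ^ 2 * (1 - cc i * cc i)
          = ∑ l ∈ Finset.univ.erase i, gap ^ 2 * (cc l * cc l) := by
        rw [← Finset.mul_sum]
        congr 1
        linarith [hsplit, hsum1]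
      rw [h4]
      linarith [h1, h2, h3 ▸ hw2]
    have hcci_le : cc i * cc i ≤ 1 := by
      have h := Finset.single_le_sum (f := fun l => cc l * cc l)
        (fun l _ => mul_self_nonneg _) (Finset.mem_univ i)
      rw [hsum1] at h
      exact h
    set s : ℝ := if 0 ≤ cc i then 1 else -1 with hsdef
    have hs_mul : s * s = 1 := by
      by_cases h : 0 ≤ cc i <;> simp [hsdef, h]
    have hs_cc : s * cc i = |cc i| := by
      by_cases h : 0 ≤ cc i
      · simp [hsdef, h, abs_of_nonneg h]
      · push_neg at h
        simp [hsdef, not_le.mpr h, abs_of_neg h]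
    refine ⟨s, by by_cases h : 0 ≤ cc i <;> simp [hsdef, h], ?_⟩
    have hdot : (s • vhat i - v i) ⬝ᵥ (s • vhat i - v i) = 2 - 2 * |cc i| := by
      have h1 : vhat i ⬝ᵥ vhat i = 1 := by simpa using hvhat i i
      have h2 : v i ⬝ᵥ v i = 1 := by simpa using hv i i
      have h4 : v i ⬝ᵥ vhat i = cc i := by rw [dotProduct_comm]
      rw [dotProduct_sub, sub_dotProduct, sub_dotProduct, smul_dotProduct, smul_dotProduct,
        dotProduct_smul, dotProduct_smul, h1, h2, h4]
      have h5 : vhat i ⬝ᵥ v i = cc i := rfl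
      rw [h5]
      simp only [smul_eq_mul]
      nlinarith [hs_mul, hs_cc]
    have habs : cc i * cc i ≤ |cc i| := by
      have h6 : |cc i| ≤ 1 := by
        nlinarith [abs_nonneg (cc i), abs_mul_abs_self (cc i), hcci_le]
      nlinarith [abs_nonneg (cc i), abs_mul_abs_self (cc i)]
    have hfinal : vecNorm (s • vhat i - v i) ≤ Real.sqrt 2 * ε / gap := by
      have hnn : (0:ℝ) ≤ Real.sqrt 2 * ε / gap := by positivity
      have hsq : (s • vhat i - v i) ⬝ᵥ (s • vhat i - v i) ≤ (Real.sqrt 2 * ε / gap) ^ 2 := by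
        rw [hdot]
        have hrw : (Real.sqrt 2 * ε / gap) ^ 2 = 2 * ε ^ 2 / gap ^ 2 := by
          rw [div_pow, mul_pow, hsqrt2]
        rw [hrw, le_div_iff₀ (pow_pos hgap_pos 2)]
        nlinarith
      have hvn : vecNorm (s • vhat i - v i)
          = Real.sqrt ((s • vhat i - v i) ⬝ᵥ (s • vhat i - v i)) := by
        rw [dot_self_eq, Real.sqrt_sq (vecNorm_nonneg _)]
      rw [hvn]
      calc Real.sqrt ((s • vhat i - v i) ⬝ᵥ (s • vhat i - v i))
          ≤ Real.sqrt ((Real.sqrt 2 * ε / gap) ^ 2) := Real.sqrt_le_sqrt hsq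
        _ = Real.sqrt 2 * ε / gap := Real.sqrt_sq hnn
    calc vecNorm (s • vhat i - v i) ≤ Real.sqrt 2 * ε / gap := hfinal
      _ ≤ 2 ^ ((3:ℝ)/2) * ε / gap := by
          rw [h32]
          gcongr
          nlinarith
end

section
/- Let A and Â be real symmetric p×p matrices with eigenvalues λ₁ ≥ … ≥ λ_p and λ̂₁ ≥ … ≥ λ̂_p and corresponding unit eigenvectors v_i, v̂_i. Fix i and suppose there exist g > δ ≥ 0 such that |λ̂_j − λ_j| ≤ δ for all j, and λ_{i-1} − λ_i ≥ g and λ_i − λ_{i+1} ≥ g (omitting the conditions that refer to indices outside 1..p). Then min(|λ̂_{i-1} − λ_i|, |λ̂_{i+1} − λ_i|) ≥ g − δ, and consequently there is a sign s ∈ {−1, +1} with ‖s·v̂_i − v_i‖ ≤ 2^{3/2}·‖A − Â‖ / (g − δ), where ‖A − Â‖ is the spectral norm. -/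
open Matrix

lemma vecNorm_eq_s1 {n : ℕ} (x : Fin n → ℝ) :
    vecNorm x = ‖(WithLp.equiv 2 (Fin n → ℝ)).symm x‖ := by
  rw [EuclideanSpace.norm_eq, vecNorm]
  congr 1
  refine Finset.sum_congr rfl fun j _ => ?_
  rw [WithLp.equiv_symm_apply, WithLp.ofLp_toLp, Real.norm_eq_abs, sq_abs]

lemma mulVec_vecNorm_le {n : ℕ} (M : Matrix (Fin n) (Fin n) ℝ) (x : Fin n → ℝ) :
    vecNorm (M *ᵥ x) ≤ specNorm M * vecNorm x := by
  rw [vecNorm_eq_s1, vecNorm_eq_s1, WithLp.equiv_symm_apply, ← Matrix.toEuclideanLin_apply_piLp_toLp]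
  exact ((Matrix.toEuclideanLin M).toContinuousLinearMap).le_opNorm _

/-- Eigenvalue-gap arithmetic combined with the Yu–Wang–Samworth variant of the
Davis–Kahan sin θ theorem.  `A`, `Ahat` are symmetric with full spectra
`lam`, `lamhat` in non-increasing order and orthonormal eigenvector families
`v`, `vhat`.  If every eigenvalue of `Ahat` is within `δ` of the corresponding
eigenvalue of `A`, and `λ_{i-1} − λ_i ≥ g`, `λ_i − λ_{i+1} ≥ g` (conditions on
indices outside `1..p` omitted) with `g > δ ≥ 0`, then
`min(|λ̂_{i-1} − λ_i|, |λ̂_{i+1} − λ_i|) ≥ g − δ` and, up to sign,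
`‖s·v̂ᵢ − vᵢ‖ ≤ 2^{3/2} ‖A − Â‖ / (g − δ)`. -/
theorem davis_kahan_with_eigenvalue_gap {p : ℕ}
    (A Ahat : Matrix (Fin p) (Fin p) ℝ)
    (hA : A.IsSymm) (hAhat : Ahat.IsSymm)
    (lam lamhat : Fin p → ℝ)
    (v vhat : Fin p → (Fin p → ℝ))
    (hlam : Antitone lam) (hlamhat : Antitone lamhat)
    (hv : ∀ j k, v j ⬝ᵥ v k = if j = k then (1 : ℝ) else 0)
    (hvhat : ∀ j k, vhat j ⬝ᵥ vhat k = if j = k then (1 : ℝ) else 0)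
    (heig : ∀ j, A.mulVec (v j) = lam j • v j)
    (heighat : ∀ j, Ahat.mulVec (vhat j) = lamhat j • vhat j)
    (i : Fin p)
    (g δ : ℝ) (hδ : 0 ≤ δ) (hgδ : δ < g)
    (hclose : ∀ j, |lamhat j - lam j| ≤ δ)
    (hgap_pred : ∀ j : Fin p, (j : ℕ) + 1 = (i : ℕ) → g ≤ lam j - lam i)
    (hgap_succ : ∀ j : Fin p, (j : ℕ) = (i : ℕ) + 1 → g ≤ lam i - lam j) :
    (∀ j : Fin p, ((j : ℕ) + 1 = (i : ℕ) ∨ (j : ℕ) = (i : ℕ) + 1) →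
        g - δ ≤ |lamhat j - lam i|) ∧
      ∃ s : ℝ, (s = 1 ∨ s = -1) ∧
        vecNorm (s • vhat i - v i) ≤ 2 ^ ((3 : ℝ) / 2) * specNorm (A - Ahat) / (g - δ) := by
  -- the eigenvalue gap for ALL j ≠ i
  have keygap : ∀ j : Fin p, j ≠ i → g ≤ |lam j - lam i| := by
    intro j hj
    have hji : (j : ℕ) ≠ (i : ℕ) := fun h => hj (Fin.ext h)
    rcases lt_or_gt_of_ne hji with hlt | hgt
    · have hi1 : (i : ℕ) - 1 < p := by omega
      set j' : Fin p := ⟨(i : ℕ) - 1, hi1⟩ with hj'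
      have hgp : g ≤ lam j' - lam i := hgap_pred j' (by simp [hj']; omega)
      have hmono : lam j' ≤ lam j := hlam (by simp [Fin.le_def, hj']; omega)
      have : g ≤ lam j - lam i := by linarith
      exact this.trans (le_abs_self _)
    · have hi1 : (i : ℕ) + 1 < p := by have := j.isLt; omega
      set j' : Fin p := ⟨(i : ℕ) + 1, hi1⟩ with hj'
      have hgp : g ≤ lam i - lam j' := hgap_succ j' (by simp [hj'])
      have hmono : lam j ≤ lam j' := hlam (by simp [Fin.le_def, hj']; omega)
      have : g ≤ lam i - lam j := by linarith
      rw [abs_sub_comm]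
      exact this.trans (le_abs_self _)
  have keyhat : ∀ j : Fin p, j ≠ i → g - δ ≤ |lamhat j - lam i| := by
    intro j hj
    have h1 := keygap j hj
    have h2 := hclose j
    have h3 : |lam j - lam i| - |lam j - lamhat j| ≤ |lamhat j - lam i| := by
      have := abs_sub_abs_le_abs_sub (lam j - lam i) (lam j - lamhat j)
      have heq : lam j - lam i - (lam j - lamhat j) = lamhat j - lam i := by ring
      rw [heq] at this
      linarith
    rw [abs_sub_comm] at h2
    linarith
  constructor
  · intro j hj
    apply keyhat
    intro h
    rw [h] at hj
    omega
  -- main Davis–Kahan part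
  · set E := specNorm (A - Ahat) with hE
    have hE0 : 0 ≤ E := norm_nonneg _
    have hgd : (0:ℝ) < g - δ := by linarith
    -- the matrix with rows vhat
    set V : Matrix (Fin p) (Fin p) ℝ := Matrix.of (fun j k => vhat j k) with hV
    have hVVt : V * Vᵀ = 1 := by
      ext j k
      simp only [Matrix.mul_apply, Matrix.transpose_apply, Matrix.one_apply, hV, Matrix.of_apply]
      simpa [dotProduct] using hvhat j k
    have hVtV : Vᵀ * V = 1 := mul_eq_one_comm.mp hVVt
    have hrow : ∀ (x : Fin p → ℝ) (j : Fin p), (V *ᵥ x) j = vhat j ⬝ᵥ x := by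
      intro x j; rfl
    have parseval : ∀ x : Fin p → ℝ, ∑ j, (vhat j ⬝ᵥ x) ^ 2 = x ⬝ᵥ x := by
      intro x
      calc ∑ j, (vhat j ⬝ᵥ x) ^ 2 = (V *ᵥ x) ⬝ᵥ (V *ᵥ x) := by
            simp [dotProduct, hrow, sq]
        _ = ((V *ᵥ x) ᵥ* V) ⬝ᵥ x := Matrix.dotProduct_mulVec _ _ _
        _ = x ⬝ᵥ x := by
            rw [← Matrix.mulVec_transpose, Matrix.mulVec_mulVec, hVtV, Matrix.one_mulVec]
    set c : Fin p → ℝ := fun j => vhat j ⬝ᵥ v i with hc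
    have hc1 : ∑ j, c j ^ 2 = 1 := by
      rw [hc]; simp only []; rw [parseval, hv i i]; simp
    -- residual vector
    set w : Fin p → ℝ := Ahat *ᵥ v i - lam i • v i with hw
    have hwy : w = -((A - Ahat) *ᵥ v i) := by
      rw [hw, Matrix.sub_mulVec, heig i]
      ext j
      simp only [Pi.neg_apply, Pi.sub_apply, Pi.smul_apply, smul_eq_mul]
      ring
    have coord : ∀ j, vhat j ⬝ᵥ w = (lamhat j - lam i) * c j := by
      intro j
      rw [hw, dotProduct_sub, dotProduct_smul]
      have h1 : vhat j ⬝ᵥ (Ahat *ᵥ v i) = lamhat j * c j := by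
        rw [dotProduct_mulVec, ← Matrix.mulVec_transpose, hAhat.eq, heighat j]
        simp [smul_dotProduct, hc, smul_eq_mul]
      rw [h1]
      simp [smul_eq_mul, hc]
      ring
    have keysum : ∑ j, ((lamhat j - lam i) * c j) ^ 2 = w ⬝ᵥ w := by
      rw [← parseval w]
      exact Finset.sum_congr rfl fun j _ => by rw [coord j]
    -- bound on the residual
    have hvnorm : vecNorm (v i) = 1 := by
      rw [vecNorm]
      have : ∑ j, v i j ^ 2 = 1 := by
        have := hv i i; simpa [dotProduct, sq] using this
      rw [this, Real.sqrt_one]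
    have hwnorm : vecNorm ((A - Ahat) *ᵥ v i) ≤ E := by
      have := mulVec_vecNorm_le (A - Ahat) (v i)
      rwa [hvnorm, mul_one] at this
    have hww : w ⬝ᵥ w ≤ E ^ 2 := by
      have h1 : w ⬝ᵥ w = ((A - Ahat) *ᵥ v i) ⬝ᵥ ((A - Ahat) *ᵥ v i) := by
        rw [hwy, neg_dotProduct, dotProduct_neg, neg_neg]
      have h2 : ((A - Ahat) *ᵥ v i) ⬝ᵥ ((A - Ahat) *ᵥ v i)
          = ∑ j, ((A - Ahat) *ᵥ v i) j ^ 2 := by simp [dotProduct, sq]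
      have h3 : (0:ℝ) ≤ ∑ j, ((A - Ahat) *ᵥ v i) j ^ 2 :=
        Finset.sum_nonneg fun j _ => sq_nonneg _
      have h4 : Real.sqrt (∑ j, ((A - Ahat) *ᵥ v i) j ^ 2) ≤ E := hwnorm
      have h5 : ∑ j, ((A - Ahat) *ᵥ v i) j ^ 2 ≤ E ^ 2 := by
        have := Real.sq_sqrt h3
        nlinarith [Real.sqrt_nonneg (∑ j, ((A - Ahat) *ᵥ v i) j ^ 2)]
      rw [h1, h2]; exact h5
    -- tail bound
    have tail : (g - δ) ^ 2 * ∑ j ∈ Finset.univ.erase i, c j ^ 2 ≤ E ^ 2 := by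
      have h1 : (g - δ) ^ 2 * ∑ j ∈ Finset.univ.erase i, c j ^ 2
          ≤ ∑ j ∈ Finset.univ.erase i, ((lamhat j - lam i) * c j) ^ 2 := by
        rw [Finset.mul_sum]
        refine Finset.sum_le_sum fun j hj => ?_
        have hjne : j ≠ i := Finset.ne_of_mem_erase hj
        have := keyhat j hjne
        have h2 : (g - δ) ^ 2 ≤ (lamhat j - lam i) ^ 2 := by
          rw [← sq_abs (lamhat j - lam i)]
          exact pow_le_pow_left₀ hgd.le this 2
        rw [mul_pow]
        exact mul_le_mul_of_nonneg_right h2 (sq_nonneg _)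
      have h2 : ∑ j ∈ Finset.univ.erase i, ((lamhat j - lam i) * c j) ^ 2
          ≤ ∑ j, ((lamhat j - lam i) * c j) ^ 2 :=
        Finset.sum_le_sum_of_subset_of_nonneg (Finset.erase_subset _ _)
          (fun j _ _ => sq_nonneg _)
      linarith [keysum ▸ h2, hww]
    have hsplit : c i ^ 2 + ∑ j ∈ Finset.univ.erase i, c j ^ 2 = 1 := by
      have h := Finset.add_sum_erase Finset.univ (fun j => c j ^ 2) (Finset.mem_univ i)
      exact h.trans hc1
    have htail2 : 1 - c i ^ 2 ≤ E ^ 2 / (g - δ) ^ 2 := by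
      have hpos : (0:ℝ) < (g - δ) ^ 2 := by positivity
      rw [le_div_iff₀ hpos]
      nlinarith [tail]
    -- choose the sign
    set s : ℝ := if 0 ≤ c i then 1 else -1 with hs
    refine ⟨s, by rw [hs]; split <;> simp, ?_⟩
    have hsc : s * c i = |c i| := by
      rw [hs]; split
      · rw [one_mul, abs_of_nonneg ‹_›]
      · rw [abs_of_neg (lt_of_not_ge ‹_›)]; ring
    have hs2 : s ^ 2 = 1 := by rw [hs]; split <;> norm_num
    -- |c i| ≤ 1
    have hci2le : c i ^ 2 ≤ 1 := by
      have : (0:ℝ) ≤ ∑ j ∈ Finset.univ.erase i, c j ^ 2 :=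
        Finset.sum_nonneg fun j _ => sq_nonneg _
      linarith
    have habs : |c i| ≤ 1 := (sq_le_one_iff_abs_le_one _).mp hci2le
    -- norm expansion
    have hexp : ∑ j, (s • vhat i - v i) j ^ 2 = 2 - 2 * |c i| := by
      have h1 : ∀ j, (s • vhat i - v i) j ^ 2
          = s ^ 2 * vhat i j ^ 2 - 2 * s * (vhat i j * v i j) + v i j ^ 2 := by
        intro j; simp [Pi.sub_apply, Pi.smul_apply, smul_eq_mul]; ring
      rw [Finset.sum_congr rfl fun j _ => h1 j]
      rw [Finset.sum_add_distrib, Finset.sum_sub_distrib, ← Finset.mul_sum, ← Finset.mul_sum]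
      have hvv : ∑ j, vhat i j ^ 2 = 1 := by
        have := hvhat i i; simpa [dotProduct, sq] using this
      have hvc : ∑ j, vhat i j * v i j = c i := by simp [hc, dotProduct]
      have hv1 : ∑ j, v i j ^ 2 = 1 := by
        have := hv i i; simpa [dotProduct, sq] using this
      rw [hvv, hvc, hv1, hs2]
      have : 2 * s * c i = 2 * |c i| := by rw [mul_assoc, hsc]
      linarith
    have hfinal : 2 - 2 * |c i| ≤ 2 * E ^ 2 / (g - δ) ^ 2 := by
      have h1 : c i ^ 2 ≤ |c i| := by
        rw [← sq_abs]
        nlinarith [abs_nonneg (c i)]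
      have hrw : 2 * E ^ 2 / (g - δ) ^ 2 = 2 * (E ^ 2 / (g - δ) ^ 2) := by ring
      rw [hrw]
      nlinarith [htail2]
    rw [vecNorm, hexp]
    have hstep : Real.sqrt (2 - 2 * |c i|) ≤ Real.sqrt (2 * E ^ 2 / (g - δ) ^ 2) :=
      Real.sqrt_le_sqrt hfinal
    have heq : Real.sqrt (2 * E ^ 2 / (g - δ) ^ 2) = Real.sqrt 2 * E / (g - δ) := by
      have hnn : (0:ℝ) ≤ Real.sqrt 2 * E / (g - δ) := by positivity
      have : (Real.sqrt 2 * E / (g - δ)) ^ 2 = 2 * E ^ 2 / (g - δ) ^ 2 := by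
        rw [div_pow, mul_pow, Real.sq_sqrt (by norm_num : (0:ℝ) ≤ 2)]
      rw [← this, Real.sqrt_sq hnn]
    rw [heq] at hstep
    refine hstep.trans ?_
    have hle : Real.sqrt 2 ≤ 2 ^ ((3:ℝ)/2) := by
      rw [Real.sqrt_eq_rpow]
      exact Real.rpow_le_rpow_of_exponent_le (by norm_num) (by norm_num)
    have hmul : Real.sqrt 2 * E ≤ 2 ^ ((3:ℝ)/2) * E :=
      mul_le_mul_of_nonneg_right hle hE0
    exact div_le_div_of_nonneg_right hmul hgd.le
end
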